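/- Any k-uniform hypergraph H on n ≥ k vertices in which every (k-1)-set of vertices has codegree strictly greater than (n-k)/2 is hypergraph connected, i.e., every two (k-1)-sets of vertices are joined by a tight walk (a sequence of edges in which consecutive edges share k-1 vertices, with the first edge containing the first set and the last edge containing the second set). -/

import Mathlib

open Finset

/-- A tight walk in a `k`-uniform hypergraph with edge set `E`: a nonempty sequence of
edges in which consecutive edges share `k-1` vertices. -/
def IsTightWalk {V : Type*} [DecidableEq V] (E : Finset (Finset V)) (k : ℕ)
    (W : List (Finset V)) : Prop :=
  W ≠ [] ∧ (∀ e ∈ W, e ∈ E) ∧ W.Chain' (fun e f => (e ∩ f).card = k - 1)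

section Aux

variable {V : Type*} [Fintype V] [DecidableEq V]

/-- Connectivity predicate: a tight walk from a set containing `A` to one containing `B`. -/
def Conn (E : Finset (Finset V)) (k : ℕ) (A B : Finset V) : Prop :=
  ∃ W : List (Finset V), IsTightWalk E k W ∧
    (∃ e₁, W.head? = some e₁ ∧ A ⊆ e₁) ∧
    (∃ e₂, W.getLast? = some e₂ ∧ B ⊆ e₂)

lemma card_inter_nonempty (X Y Z : Finset V) (hX : X ⊆ Z) (hY : Y ⊆ Z)
    (h1 : (Z.card : ℚ) / 2 < X.card) (h2 : (Z.card : ℚ) / 2 < Y.card) :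
    (X ∩ Y).Nonempty := by
  have hq : (Z.card : ℚ) < X.card + Y.card := by linarith
  have hN : Z.card < X.card + Y.card := by exact_mod_cast hq
  have hU : (X ∪ Y).card ≤ Z.card := card_le_card (union_subset hX hY)
  have := card_union_add_card_inter X Y
  rw [← card_pos]
  omega

lemma conn_trans (E : Finset (Finset V)) (k : ℕ) (hk : 2 ≤ k)
    (hunif : ∀ e ∈ E, e.card = k) {A B C : Finset V} (hB : B.card = k - 1)
    (h1 : Conn E k A B) (h2 : Conn E k B C) : Conn E k A C := by
  obtain ⟨W1, ⟨hW1ne, hW1E, hW1c⟩, ⟨e1, he1, hAe1⟩, ⟨f, hf, hBf⟩⟩ := h1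
  obtain ⟨W2, ⟨hW2ne, hW2E, hW2c⟩, ⟨g, hg, hBg⟩, ⟨e2, he2, hCe2⟩⟩ := h2
  by_cases hfg : f = g
  · -- drop the first edge of W2
    obtain ⟨g0, T, hW2eq⟩ : ∃ g0 T, W2 = g0 :: T := by
      cases W2 with
      | nil => exact absurd rfl hW2ne
      | cons a t => exact ⟨a, t, rfl⟩
    subst hW2eq
    replace hg : g0 = g := by simpa using hg
    rcases T with _ | ⟨t0, T'⟩
    · -- W2 = [g]; then C ⊆ g = f = last of W1, so W1 works
      have he2' : e2 = g0 := by exact (by simpa using he2 : g0 = e2).symm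
      refine ⟨W1, ⟨hW1ne, hW1E, hW1c⟩, ⟨e1, he1, hAe1⟩, ⟨f, hf, ?_⟩⟩
      rw [hfg, ← hg, ← he2']; exact hCe2
    · refine ⟨W1 ++ (t0 :: T'), ⟨by simp [hW1ne], ?_, ?_⟩, ⟨e1, ?_, hAe1⟩,
        ⟨e2, ?_, hCe2⟩⟩
      · intro e he
        rcases List.mem_append.1 he with h | h
        · exact hW1E e h
        · exact hW2E e (List.mem_cons_of_mem _ h)
      · refine hW1c.append (hW2c.tail) ?_
        intro x hx y hy
        have hx' : x = f := by rw [hf] at hx; exact (by simpa using hx : f = x).symm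
        have hy' : y = t0 := by exact (by simpa using hy : t0 = y).symm
        subst hx'; subst hy'
        have := (List.isChain_cons_cons.1 hW2c).1
        rwa [hfg, ← hg]
      · rw [List.head?_append_of_ne_nil _ hW1ne]; exact he1
      · rw [List.getLast?_append]
        have : (t0 :: T').getLast? = some e2 := by
          have := he2
          rwa [List.getLast?_cons_cons] at this
        rw [this]; rfl
  · -- f ≠ g : |f ∩ g| = k - 1
    have hfE : f ∈ E := hW1E f (List.mem_of_mem_getLast? hf)
    have hgE : g ∈ E := hW2E g (List.mem_of_mem_head? hg)
    have hfk := hunif f hfE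
    have hgk := hunif g hgE
    have hBi : B ⊆ f ∩ g := subset_inter hBf hBg
    have hlow : k - 1 ≤ (f ∩ g).card := hB ▸ card_le_card hBi
    have hle : (f ∩ g).card ≤ k := hfk ▸ card_le_card (inter_subset_left)
    have hne : (f ∩ g).card ≠ k := by
      intro h
      apply hfg
      have h1 : f ∩ g = f := eq_of_subset_of_card_le inter_subset_left (by omega)
      have h2 : f ∩ g = g := eq_of_subset_of_card_le inter_subset_right (by omega)
      rw [← h1, h2]
    have hcard : (f ∩ g).card = k - 1 := by omega
    refine ⟨W1 ++ W2, ⟨by simp [hW1ne], ?_, ?_⟩, ⟨e1, ?_, hAe1⟩, ⟨e2, ?_, hCe2⟩⟩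
    · intro e he
      rcases List.mem_append.1 he with h | h
      · exact hW1E e h
      · exact hW2E e h
    · refine hW1c.append hW2c ?_
      intro x hx y hy
      have hx' : x = f := by rw [hf] at hx; exact (by simpa using hx : f = x).symm
      have hy' : y = g := by rw [hg] at hy; exact (by simpa using hy : g = y).symm
      subst hx'; subst hy'; exact hcard
    · rw [List.head?_append_of_ne_nil _ hW1ne]; exact he1
    · rw [List.getLast?_append, he2]; rfl

lemma exists_edge (E : Finset (Finset V)) (k : ℕ) (hk : 2 ≤ k)
    (hn : k ≤ Fintype.card V)
    (hunif : ∀ e ∈ E, e.card = k)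
    (hcod : ∀ S : Finset V, S.card = k - 1 →
      ((Fintype.card V : ℚ) - (k : ℚ)) / 2 <
        ((Finset.univ.filter (fun v => insert v S ∈ E)).card : ℚ))
    (S : Finset V) (hS : S.card = k - 1) :
    ∃ v, v ∉ S ∧ insert v S ∈ E := by
  have h := hcod S hS
  have h0 : (0 : ℚ) ≤ ((Fintype.card V : ℚ) - (k : ℚ)) / 2 := by
    have : (k : ℚ) ≤ (Fintype.card V : ℚ) := by exact_mod_cast hn
    linarith
  have hpos : 0 < (Finset.univ.filter (fun v => insert v S ∈ E)).card := by
    by_contra hc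
    push_neg at hc
    interval_cases h' : (Finset.univ.filter (fun v => insert v S ∈ E)).card
    · push_cast at h; linarith
  obtain ⟨v, hv⟩ := card_pos.1 hpos
  have hvE : insert v S ∈ E := (mem_filter.1 hv).2
  refine ⟨v, ?_, hvE⟩
  intro hvS
  have : (insert v S).card = k := hunif _ hvE
  rw [insert_eq_self.2 hvS, hS] at this
  omega

lemma step (E : Finset (Finset V)) (k : ℕ) (hk : 2 ≤ k)
    (hn : k ≤ Fintype.card V)
    (hunif : ∀ e ∈ E, e.card = k)
    (hcod : ∀ S : Finset V, S.card = k - 1 →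
      ((Fintype.card V : ℚ) - (k : ℚ)) / 2 <
        ((Finset.univ.filter (fun v => insert v S ∈ E)).card : ℚ))
    (S : Finset V) (hS : S.card = k - 2) (a b : V)
    (ha : a ∉ S) (hb : b ∉ S) (hab : a ≠ b) :
    Conn E k (insert a S) (insert b S) := by
  set A := insert a S with hA
  set B := insert b S with hB
  have hAcard : A.card = k - 1 := by rw [hA, card_insert_of_notMem ha, hS]; omega
  have hBcard : B.card = k - 1 := by rw [hB, card_insert_of_notMem hb, hS]; omega
  have hbA : b ∉ A := by simp [hA, hab.symm, hb]
  have haB : a ∉ B := by simp [hB, hab, ha]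
  by_cases hba : insert b A ∈ E
  · -- single edge containing both
    refine ⟨[insert b A], ⟨by simp, by simpa using hba, List.isChain_singleton _⟩,
      ⟨insert b A, rfl, subset_insert _ _⟩, ⟨insert b A, rfl, ?_⟩⟩
    rw [hB, hA]
    exact insert_subset_insert _ (subset_insert _ _) |>.trans
      (by rw [Finset.insert_comm])
  · by_cases hab' : insert a B ∈ E
    · refine ⟨[insert a B], ⟨by simp, by simpa using hab', List.isChain_singleton _⟩,
        ⟨insert a B, rfl, ?_⟩, ⟨insert a B, rfl, subset_insert _ _⟩⟩
      rw [hA, hB]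
      exact insert_subset_insert _ (subset_insert _ _) |>.trans
        (by rw [Finset.insert_comm])
    · -- count common neighbors outside A ∪ B
      set NA := Finset.univ.filter (fun v => insert v A ∈ E) with hNA
      set NB := Finset.univ.filter (fun v => insert v B ∈ E) with hNB
      have hABcard : (A ∪ B).card = k := by
        have : A ∪ B = insert a (insert b S) := by
          rw [hA, hB, insert_union, union_comm]
          congr 1
          rw [insert_union, union_self]
        rw [this, card_insert_of_notMem (by simp [hab, ha]),
          card_insert_of_notMem hb, hS]
        omega
      have hZcard : (Finset.univ \ (A ∪ B)).card = Fintype.card V - k := by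
        rw [card_sdiff_of_subset (subset_univ _), card_univ, hABcard]
      have hsub : ∀ (X : Finset V) (x : V), x ∉ X → X.card = k - 1 →
          (Finset.univ.filter (fun v => insert v X ∈ E)) ⊆ Finset.univ \ (insert x X) →
          True := fun _ _ _ _ _ => trivial
      have hNAsub : NA ⊆ Finset.univ \ (A ∪ B) := by
        intro v hv
        have hv' := hv
        rw [hNA] at hv'
        have hvE : insert v A ∈ E := (mem_filter.1 hv').2
        have hvA : v ∉ A := by
          intro hvA
          have := hunif _ hvE
          rw [insert_eq_self.2 hvA, hAcard] at this
          omega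
        have hvb : v ≠ b := by rintro rfl; exact hba hvE
        have hvB : v ∉ B := by
          rw [hB]
          simp only [mem_insert]
          push_neg
          exact ⟨hvb, fun hvS => hvA (hA ▸ mem_insert_of_mem hvS)⟩
        simp [hvA, hvB]
      have hNBsub : NB ⊆ Finset.univ \ (A ∪ B) := by
        intro v hv
        have hv' := hv
        rw [hNB] at hv'
        have hvE : insert v B ∈ E := (mem_filter.1 hv').2
        have hvB : v ∉ B := by
          intro hvB
          have := hunif _ hvE
          rw [insert_eq_self.2 hvB, hBcard] at this
          omega
        have hva : v ≠ a := by rintro rfl; exact hab' hvE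
        have hvA : v ∉ A := by
          rw [hA]
          simp only [mem_insert]
          push_neg
          exact ⟨hva, fun hvS => hvB (hB ▸ mem_insert_of_mem hvS)⟩
        simp [hvA, hvB]
      have hcast : ((Fintype.card V : ℚ) - (k : ℚ)) = ((Fintype.card V - k : ℕ) : ℚ) := by
        rw [Nat.cast_sub hn]
      have h1 : (((Finset.univ \ (A ∪ B)).card : ℚ)) / 2 < NA.card := by
        rw [hZcard, ← hcast]; exact hcod A hAcard
      have h2 : (((Finset.univ \ (A ∪ B)).card : ℚ)) / 2 < NB.card := by
        rw [hZcard, ← hcast]; exact hcod B hBcard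
      obtain ⟨v, hv⟩ := card_inter_nonempty NA NB _ hNAsub hNBsub h1 h2
      rw [mem_inter] at hv
      have hvA : insert v A ∈ E := (mem_filter.1 hv.1).2
      have hvB : insert v B ∈ E := (mem_filter.1 hv.2).2
      have hvnA : v ∉ A := by
        have := mem_sdiff.1 (hNAsub hv.1)
        intro h; exact this.2 (mem_union_left _ h)
      have hvnB : v ∉ B := by
        have := mem_sdiff.1 (hNBsub hv.2)
        intro h; exact this.2 (mem_union_right _ h)
      have hvS : v ∉ S := fun h => hvnA (hA ▸ mem_insert_of_mem h)
      refine ⟨[insert v A, insert v B], ⟨by simp, ?_, ?_⟩,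
        ⟨insert v A, rfl, subset_insert _ _⟩, ⟨insert v B, rfl, subset_insert _ _⟩⟩
      · intro e he
        simp only [List.mem_cons, List.not_mem_nil, or_false] at he
        rcases he with rfl | rfl
        · exact hvA
        · exact hvB
      · simp only [List.Chain', List.isChain_pair]
        have heq : insert v A ∩ insert v B = insert v S := by
          ext x
          simp only [mem_inter, mem_insert, hA, hB]
          constructor
          · rintro ⟨hx1 | hx1, hx2 | hx2⟩
            · exact Or.inl hx1
            · exact Or.inl hx1
            · exact Or.inl hx2
            · rcases hx1 with rfl | hx1
              · rcases hx2 with rfl | hx2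
                · exact absurd rfl hab
                · exact absurd hx2 ha
              · exact Or.inr hx1
          · rintro (rfl | hx)
            · exact ⟨Or.inl rfl, Or.inl rfl⟩
            · exact ⟨Or.inr (Or.inr hx), Or.inr (Or.inr hx)⟩
        rw [heq, card_insert_of_notMem hvS, hS]
        omega

lemma conn_of_card (E : Finset (Finset V)) (k : ℕ) (hk : 2 ≤ k)
    (hn : k ≤ Fintype.card V)
    (hunif : ∀ e ∈ E, e.card = k)
    (hcod : ∀ S : Finset V, S.card = k - 1 →
      ((Fintype.card V : ℚ) - (k : ℚ)) / 2 <
        ((Finset.univ.filter (fun v => insert v S ∈ E)).card : ℚ)) :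
    ∀ m (A B : Finset V), A.card = k - 1 → B.card = k - 1 → (B \ A).card = m →
      Conn E k A B := by
  intro m
  induction m with
  | zero =>
    intro A B hA hB hm
    have hBA : B ⊆ A := by
      rw [← sdiff_eq_empty_iff_subset]
      exact card_eq_zero.1 hm
    have hAB : A = B := (eq_of_subset_of_card_le hBA (by rw [hA, hB])).symm
    subst hAB
    obtain ⟨v, hvA, hvE⟩ := exists_edge E k hk hn hunif hcod A hA
    exact ⟨[insert v A], ⟨by simp, by simpa using hvE, List.isChain_singleton _⟩,
      ⟨insert v A, rfl, subset_insert _ _⟩, ⟨insert v A, rfl, subset_insert _ _⟩⟩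
  | succ m ih =>
    intro A B hA hB hm
    obtain ⟨b, hb⟩ := card_pos.1 (by omega : 0 < (B \ A).card)
    have hABcard : (A \ B).card = m + 1 := by
      rw [card_sdiff_comm (hA.trans hB.symm)]; exact hm
    obtain ⟨a, ha⟩ := card_pos.1 (by omega : 0 < (A \ B).card)
    rw [mem_sdiff] at hb ha
    set S := A.erase a with hSdef
    have haA : a ∈ A := ha.1
    have hS : S.card = k - 2 := by
      rw [hSdef, card_erase_of_mem haA, hA]; omega
    have haS : a ∉ S := notMem_erase _ _
    have hbS : b ∉ S := fun h => hb.2 (mem_of_mem_erase h)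
    have hab : a ≠ b := fun h => hb.2 (h ▸ haA)
    have hAeq : insert a S = A := insert_erase haA
    set A' := insert b S with hA'def
    have hA' : A'.card = k - 1 := by
      rw [hA'def, card_insert_of_notMem hbS, hS]; omega
    have hstep : Conn E k A A' := by
      rw [← hAeq]
      exact step E k hk hn hunif hcod S hS a b haS hbS hab
    have hBA' : B \ A' = (B \ A).erase b := by
      ext x
      simp only [hA'def, hSdef, mem_sdiff, mem_insert, mem_erase, not_or]
      constructor
      · rintro ⟨hxB, hxb, hxe⟩
        refine ⟨hxb, hxB, fun hxA => ?_⟩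
        rcases eq_or_ne x a with rfl | hxa
        · exact ha.2 hxB
        · exact hxe ⟨hxa, hxA⟩
      · rintro ⟨hxb, hxB, hxA⟩
        exact ⟨hxB, hxb, fun h => hxA h.2⟩
    have hm' : (B \ A').card = m := by
      rw [hBA', card_erase_of_mem (mem_sdiff.2 hb), hm]; omega
    exact conn_trans E k hk hunif hA' hstep (ih A' B hA' hB hm')

end Aux

/-- Any `k`-uniform hypergraph on `n ≥ k` vertices in which every `(k-1)`-set has codegree
strictly greater than `(n-k)/2` is hypergraph connected. -/
theorem stmt0 {V : Type*} [Fintype V] [DecidableEq V] (k : ℕ) (hk : 2 ≤ k)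
    (hn : k ≤ Fintype.card V) (E : Finset (Finset V))
    (hunif : ∀ e ∈ E, e.card = k)
    (hcod : ∀ S : Finset V, S.card = k - 1 →
      ((Fintype.card V : ℚ) - (k : ℚ)) / 2 <
        ((Finset.univ.filter (fun v => insert v S ∈ E)).card : ℚ)) :
    ∀ A B : Finset V, A.card = k - 1 → B.card = k - 1 →
      ∃ W : List (Finset V), IsTightWalk E k W ∧
        (∃ e₁, W.head? = some e₁ ∧ A ⊆ e₁) ∧
        (∃ e₂, W.getLast? = some e₂ ∧ B ⊆ e₂) := by
  intro A B hA hB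
  exact conn_of_card E k hk hn hunif hcod (B \ A).card A B hA hB rfl
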